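/- Expected loss of the Projection DPP least squares estimator: if the rows of X ∈ R^{n×d} are in general position (every d rows are linearly independent) and S is drawn with Pr{S} ∝ det(X_S)^2 over size-d subsets, then E[L(X_S^{-1} y_S)] = (d+1) L(w*), where L(w) = ||Xw − y||^2 and w* = argmin_w L(w). -/

import Mathlib

open Finset Function


open Matrix

/-- The `d × d` submatrix of rows of `X` indexed by a subset `S` of size `d`. -/
noncomputable def rowSub {n d : ℕ} (X : Matrix (Fin n) (Fin d) ℝ) (S : Finset (Fin n))
    (h : S.card = d) : Matrix (Fin d) (Fin d) ℝ :=
  X.submatrix (fun i => S.orderEmbOfFin h i) id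

/-- The subvector of `y` indexed by a subset `S` of size `d`. -/
noncomputable def vecSub {n d : ℕ} (y : Fin n → ℝ) (S : Finset (Fin n))
    (h : S.card = d) : Fin d → ℝ :=
  fun i => y (S.orderEmbOfFin h i)

/-- The least squares loss `L(w) = ‖Xw - y‖²`. -/
noncomputable def lsLoss {n d : ℕ} (X : Matrix (Fin n) (Fin d) ℝ) (y : Fin n → ℝ)
    (w : Fin d → ℝ) : ℝ :=
  ∑ i, ((X *ᵥ w) i - y i) ^ 2

variable {n k : ℕ}

noncomputable def dsq (A : Matrix (Fin n) (Fin k) ℝ) (T : Finset (Fin n)) : ℝ :=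
  if h : T.card = k then (A.submatrix (T.orderEmbOfFin h) id).det ^ 2 else 0

lemma dsq_of_card (A : Matrix (Fin n) (Fin k) ℝ) {T : Finset (Fin n)} (h : T.card = k) :
    dsq A T = (A.submatrix (T.orderEmbOfFin h) id).det ^ 2 := by
  rw [dsq, dif_pos h]

lemma inner_perm_sum (A : Matrix (Fin n) (Fin k) ℝ) {T : Finset (Fin n)} (h : T.card = k) :
    ∑ σ : Equiv.Perm (Fin k),
        (∏ x, A (T.orderEmbOfFin h (σ x)) x) *
          (A.submatrix (fun x => T.orderEmbOfFin h (σ x)) id).det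
      = dsq A T := by
  rw [dsq_of_card A h]
  set e := T.orderEmbOfFin h
  have hsub : ∀ σ : Equiv.Perm (Fin k),
      (A.submatrix (fun x => e (σ x)) id) = (A.submatrix (⇑e) id).submatrix (⇑σ) id := by
    intro σ; rw [Matrix.submatrix_submatrix]; rfl
  calc ∑ σ : Equiv.Perm (Fin k), (∏ x, A (e (σ x)) x) *
          (A.submatrix (fun x => e (σ x)) id).det
      = ∑ σ : Equiv.Perm (Fin k),
          ((Equiv.Perm.sign σ : ℤ) : ℝ) * (∏ x, (A.submatrix (⇑e) id) (σ x) x) *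
            (A.submatrix (⇑e) id).det := by
        refine Finset.sum_congr rfl fun σ _ => ?_
        rw [hsub σ, Matrix.det_permute]
        simp [Matrix.submatrix_apply]
        ring
    _ = (∑ σ : Equiv.Perm (Fin k),
          ((Equiv.Perm.sign σ : ℤ) : ℝ) * (∏ x, (A.submatrix (⇑e) id) (σ x) x)) *
            (A.submatrix (⇑e) id).det := by rw [Finset.sum_mul]
    _ = (A.submatrix (⇑e) id).det ^ 2 := by
        rw [← Matrix.det_apply', sq]

lemma sum_inj_eq_pairs (A : Matrix (Fin n) (Fin k) ℝ) :
    ∑ f ∈ Finset.univ.filter (fun f : Fin k → Fin n => Injective f),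
        (∏ i, A (f i) i) * (A.submatrix f id).det
      = ∑ p ∈ (Finset.powersetCard k (Finset.univ : Finset (Fin n))).attach ×ˢ
              (Finset.univ : Finset (Equiv.Perm (Fin k))),
          (∏ x, A (p.1.1.orderEmbOfFin (Finset.mem_powersetCard.mp p.1.2).2 (p.2 x)) x) *
            (A.submatrix
              (fun x => p.1.1.orderEmbOfFin (Finset.mem_powersetCard.mp p.1.2).2 (p.2 x))
              id).det := by
  classical
  refine (Finset.sum_bij
    (i := fun p _ => fun x => p.1.1.orderEmbOfFin (Finset.mem_powersetCard.mp p.1.2).2 (p.2 x))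
    ?_ ?_ ?_ ?_).symm
  · -- lands in injective functions
    intro p _
    simp only [Finset.mem_filter, Finset.mem_univ, true_and]
    exact fun a b hab => p.2.injective ((p.1.1.orderEmbOfFin _).injective hab)
  · -- injectivity of the map
    intro p₁ h₁ p₂ h₂ heq
    obtain ⟨⟨T₁, hT₁⟩, σ₁⟩ := p₁
    obtain ⟨⟨T₂, hT₂⟩, σ₂⟩ := p₂
    have hc₁ := (Finset.mem_powersetCard.mp hT₁).2
    have hc₂ := (Finset.mem_powersetCard.mp hT₂).2
    have heq' : (fun x => T₁.orderEmbOfFin hc₁ (σ₁ x))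
        = (fun x => T₂.orderEmbOfFin hc₂ (σ₂ x)) := heq
    have hrange : ∀ (T : Finset (Fin n)) (h : T.card = k) (σ : Equiv.Perm (Fin k)),
        Set.range (fun x => T.orderEmbOfFin h (σ x)) = ↑T := by
      intro T h σ
      have : (fun x => T.orderEmbOfFin h (σ x)) = ⇑(T.orderEmbOfFin h) ∘ ⇑σ := rfl
      rw [this, Set.range_comp, Set.range_eq_univ.mpr σ.surjective, Set.image_univ,
        Finset.range_orderEmbOfFin]
    have hTeq : T₁ = T₂ := by
      have h1 := hrange T₁ hc₁ σ₁
      rw [heq', hrange T₂ hc₂ σ₂] at h1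
      exact Finset.coe_injective h1.symm
    subst hTeq
    have hσ : σ₁ = σ₂ :=
      Equiv.ext fun x => (T₁.orderEmbOfFin hc₁).injective (congrFun heq' x)
    simp [hσ]
  · -- surjectivity onto injective functions
    intro f hf
    have hfi : Injective f := by simpa using hf
    set T : Finset (Fin n) := Finset.image f Finset.univ with hTdef
    have hcard : T.card = k := by
      rw [hTdef, Finset.card_image_of_injective _ hfi, Finset.card_univ, Fintype.card_fin]
    have hmem : T ∈ Finset.powersetCard k (Finset.univ : Finset (Fin n)) :=
      Finset.mem_powersetCard.mpr ⟨Finset.subset_univ _, hcard⟩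
    have hfT : ∀ x, f x ∈ T := fun x => Finset.mem_image_of_mem f (Finset.mem_univ x)
    set g : Fin k → Fin k := fun x => (T.orderIsoOfFin hcard).symm ⟨f x, hfT x⟩ with hg
    have hginj : Injective g := by
      intro a b hab
      have h1 : (⟨f a, hfT a⟩ : {x // x ∈ T}) = ⟨f b, hfT b⟩ :=
        (T.orderIsoOfFin hcard).toEquiv.symm.injective hab
      exact hfi (Subtype.ext_iff.mp h1)
    refine ⟨(⟨T, hmem⟩, Equiv.ofBijective g (Finite.injective_iff_bijective.mp hginj)),
      Finset.mem_product.mpr ⟨Finset.mem_attach _ _, Finset.mem_univ _⟩, ?_⟩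
    funext x
    show T.orderEmbOfFin hcard (g x) = f x
    have h1 : ((T.orderIsoOfFin hcard) (g x) : Fin n) = f x := by
      rw [hg]
      simp
    exact (Finset.coe_orderIsoOfFin_apply T hcard (g x)).symm.trans h1
  · intro p _
    rfl

lemma det_gram_expand {n k : ℕ} (A : Matrix (Fin n) (Fin k) ℝ) :
    (Aᵀ * A).det = ∑ f : Fin k → Fin n, (∏ i, A (f i) i) * (A.submatrix f id).det := by
  have h1 : (fun i => (Aᵀ * A) i) = fun i => ∑ l : Fin n, A l i • A l := by
    funext i
    funext j
    simp only [Matrix.mul_apply, Finset.sum_apply, Pi.smul_apply, smul_eq_mul,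
      Matrix.transpose_apply]
  have h2 : (Aᵀ * A).det = Matrix.detRowAlternating (fun i => ∑ l : Fin n, A l i • A l) := by
    rw [← h1]
    rfl
  rw [h2]
  rw [show (Matrix.detRowAlternating (R := ℝ) (n := Fin k)
        (fun i => ∑ l : Fin n, A l i • A l) : ℝ)
      = (Matrix.detRowAlternating (R := ℝ) (n := Fin k)).toMultilinearMap
        (fun i => ∑ l : Fin n, (fun i l => A l i • A l) i l) from rfl]
  rw [MultilinearMap.map_sum]
  refine Finset.sum_congr rfl fun r _ => ?_
  have := (Matrix.detRowAlternating (R := ℝ) (n := Fin k)).toMultilinearMap.map_smul_univ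
    (fun i => A (r i) i) (fun i => A (r i))
  simp only [this]
  rw [smul_eq_mul]
  rfl

lemma cauchy_binet_gram (A : Matrix (Fin n) (Fin k) ℝ) :
    (Aᵀ * A).det = ∑ T ∈ Finset.powersetCard k (Finset.univ : Finset (Fin n)), dsq A T := by
  classical
  rw [det_gram_expand]
  have hzero : ∀ f : Fin k → Fin n, ¬ Injective f →
      (∏ i, A (f i) i) * (A.submatrix f id).det = 0 := by
    intro f hf
    rw [Injective] at hf; push_neg at hf
    obtain ⟨i, j, hij, hne⟩ := hf
    have : (A.submatrix f id).det = 0 := by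
      refine Matrix.det_zero_of_row_eq hne ?_
      funext l
      simp [Matrix.submatrix_apply, hij]
    rw [this, mul_zero]
  have hstep1 : ∑ f : Fin k → Fin n, (∏ i, A (f i) i) * (A.submatrix f id).det
      = ∑ f ∈ Finset.univ.filter (fun f : Fin k → Fin n => Injective f),
          (∏ i, A (f i) i) * (A.submatrix f id).det := by
    refine (Finset.sum_subset (Finset.filter_subset _ _) fun f _ hf => ?_).symm
    refine hzero f ?_
    simpa using hf
  rw [hstep1, sum_inj_eq_pairs, Finset.sum_product]
  rw [← Finset.sum_attach (Finset.powersetCard k (Finset.univ : Finset (Fin n))) (dsq A)]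
  refine Finset.sum_congr rfl fun T _ => ?_
  exact inner_perm_sum A (Finset.mem_powersetCard.mp T.2).2

lemma det_sq_range {N K : ℕ} (M : Matrix (Fin N) (Fin K) ℝ) (g h : Fin K → Fin N)
    (hg : Injective g) (hh : Injective h) (hr : Set.range g = Set.range h) :
    (M.submatrix g id).det ^ 2 = (M.submatrix h id).det ^ 2 := by
  set σ : Fin K ≃ Fin K :=
    (Equiv.ofInjective g hg).trans ((Equiv.setCongr hr).trans (Equiv.ofInjective h hh).symm)
    with hσ
  have hcomp : ∀ x, h (σ x) = g x := by
    intro x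
    show h ((Equiv.ofInjective h hh).symm _) = g x
    rw [Equiv.apply_ofInjective_symm hh]
    rfl
  have hsub : M.submatrix g id = (M.submatrix h id).submatrix (⇑σ) id := by
    ext a b
    simp [Matrix.submatrix_apply, hcomp a]
  rw [hsub, Matrix.det_permute]
  rw [mul_pow, ← Int.cast_pow, ← Units.val_pow_eq_pow_val, Int.units_sq]
  simp

lemma double_count {N : ℕ} (k : ℕ) (G : Finset (Fin N) → ℝ) :
    ∑ S ∈ Finset.powersetCard k (Finset.univ : Finset (Fin N)), ∑ i ∈ Sᶜ, G (insert i S)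
      = ∑ T ∈ Finset.powersetCard (k+1) (Finset.univ : Finset (Fin N)),
          ((k : ℝ) + 1) * G T := by
  classical
  have hR : ∀ T ∈ Finset.powersetCard (k+1) (Finset.univ : Finset (Fin N)),
      ((k : ℝ) + 1) * G T = ∑ _i ∈ T, G T := by
    intro T hT
    rw [Finset.sum_const]
    obtain ⟨-, hcard⟩ := Finset.mem_powersetCard.mp hT
    rw [hcard]
    ring
  rw [Finset.sum_congr rfl hR, Finset.sum_sigma', Finset.sum_sigma']
  · refine Finset.sum_nbij' (i := fun p => ⟨insert p.2 p.1, p.2⟩)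
      (j := fun p => ⟨p.1.erase p.2, p.2⟩) ?_ ?_ ?_ ?_ ?_
    · rintro ⟨S, i⟩ hp
      rw [Finset.mem_sigma] at hp ⊢
      obtain ⟨hS, hi⟩ := hp
      have hiS : i ∉ S := by simpa using hi
      obtain ⟨-, hcard⟩ := Finset.mem_powersetCard.mp hS
      exact ⟨Finset.mem_powersetCard.mpr ⟨Finset.subset_univ _, by
        rw [Finset.card_insert_of_notMem hiS, hcard]⟩, Finset.mem_insert_self _ _⟩
    · rintro ⟨T, i⟩ hp
      rw [Finset.mem_sigma] at hp ⊢
      obtain ⟨hT, hi⟩ := hp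
      obtain ⟨-, hcard⟩ := Finset.mem_powersetCard.mp hT
      refine ⟨Finset.mem_powersetCard.mpr ⟨Finset.subset_univ _, by
        rw [Finset.card_erase_of_mem hi, hcard]; rfl⟩, by simp⟩
    · rintro ⟨S, i⟩ hp
      rw [Finset.mem_sigma] at hp
      have hiS : i ∉ S := by simpa using hp.2
      simp [Finset.erase_insert hiS]
    · rintro ⟨T, i⟩ hp
      rw [Finset.mem_sigma] at hp
      simp [Finset.insert_erase hp.2]
    · rintro ⟨S, i⟩ hp
      rfl

noncomputable def augP {n d : ℕ} (X : Matrix (Fin n) (Fin d) ℝ) (r : Fin n → ℝ) :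
    Matrix (Fin n) (Fin d ⊕ Fin 1) ℝ :=
  Matrix.of fun i => Sum.elim (X i) (fun _ => r i)

lemma key_det {n d : ℕ} (X : Matrix (Fin n) (Fin d) ℝ) (y : Fin n → ℝ) (w : Fin d → ℝ)
    (S : Finset (Fin n)) (h : S.card = d) (hdet : (rowSub X S h).det ≠ 0) (i : Fin n) :
    ((augP X (fun j => y j - (X *ᵥ w) j)).submatrix
        (Sum.elim (fun a => S.orderEmbOfFin h a) (fun _ : Fin 1 => i)) id).det
      = (rowSub X S h).det *
        (y i - (X *ᵥ ((rowSub X S h)⁻¹ *ᵥ vecSub y S h)) i) := by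
  classical
  set r : Fin n → ℝ := fun j => y j - (X *ᵥ w) j with hr
  set A := rowSub X S h with hA
  set e := S.orderEmbOfFin h with he
  have hinv : Invertible A := A.invertibleOfIsUnitDet (isUnit_iff_ne_zero.mpr hdet)
  set B : Matrix (Fin d) (Fin 1) ℝ := Matrix.of fun a _ => r (e a) with hB
  set C : Matrix (Fin 1) (Fin d) ℝ := Matrix.of fun _ b => X i b with hC
  set Dm : Matrix (Fin 1) (Fin 1) ℝ := Matrix.of fun _ _ => r i with hDm
  have hQ : (augP X r).submatrix (Sum.elim (fun a => e a) (fun _ : Fin 1 => i)) id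
      = Matrix.fromBlocks A B C Dm := by
    ext a b
    rcases a with a | a <;> rcases b with b | b <;>
      simp [augP, rowSub, Matrix.submatrix_apply, Matrix.fromBlocks, hA, hB, hC, hDm, he]
  rw [hQ, Matrix.det_fromBlocks₁₁, Matrix.invOf_eq_nonsing_inv]
  congr 1
  rw [Matrix.det_fin_one]
  -- compute the 1×1 entry
  have hCAB : (C * A⁻¹ * B) 0 0 = X i ⬝ᵥ (A⁻¹ *ᵥ vecSub r S h) := by
    simp only [Matrix.mul_apply, Matrix.mulVec, dotProduct, hB, hC, Matrix.of_apply,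
      Finset.sum_mul, Finset.mul_sum]
    rw [Finset.sum_comm]
    refine Finset.sum_congr rfl fun b _ => Finset.sum_congr rfl fun a _ => ?_
    simp [vecSub, he]
    ring
  have hrS : vecSub r S h = vecSub y S h - A *ᵥ w := by
    funext j
    simp [vecSub, hr, hA, rowSub, Matrix.mulVec, dotProduct, Matrix.submatrix_apply, he,
      Pi.sub_apply]
  have hAr : A⁻¹ *ᵥ vecSub r S h = (A⁻¹ *ᵥ vecSub y S h) - w := by
    rw [hrS, Matrix.mulVec_sub, Matrix.mulVec_mulVec, Matrix.nonsing_inv_mul A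
      (isUnit_iff_ne_zero.mpr hdet), Matrix.one_mulVec]
  have hsub : (Dm - C * A⁻¹ * B) 0 0 = Dm 0 0 - (C * A⁻¹ * B) 0 0 := rfl
  rw [hsub, hCAB, hAr, dotProduct_sub]
  have h1 : X i ⬝ᵥ (A⁻¹ *ᵥ vecSub y S h) = (X *ᵥ (A⁻¹ *ᵥ vecSub y S h)) i := rfl
  have h2 : X i ⬝ᵥ w = (X *ᵥ w) i := rfl
  rw [h1, h2]
  show r i - _ = _
  rw [hr]
  ring

lemma per_S {n d : ℕ} (X : Matrix (Fin n) (Fin d) ℝ) (y : Fin n → ℝ) (w : Fin d → ℝ)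
    (S : Finset (Fin n)) (h : S.card = d) (hdet : (rowSub X S h).det ≠ 0) :
    (rowSub X S h).det ^ 2 * lsLoss X y ((rowSub X S h)⁻¹ *ᵥ vecSub y S h)
      = ∑ i ∈ Sᶜ,
          dsq ((augP X (fun j => y j - (X *ᵥ w) j)).submatrix id ⇑finSumFinEquiv.symm)
            (insert i S) := by
  classical
  set r : Fin n → ℝ := fun j => y j - (X *ᵥ w) j with hr
  set A := rowSub X S h with hA
  set e := S.orderEmbOfFin h with he
  set wS := A⁻¹ *ᵥ vecSub y S h with hwS
  set M := (augP X r).submatrix id ⇑finSumFinEquiv.symm with hM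
  have hterm : ∀ i : Fin n,
      ((augP X r).submatrix (Sum.elim (fun a => e a) (fun _ : Fin 1 => i)) id).det ^ 2
        = A.det ^ 2 * ((X *ᵥ wS) i - y i) ^ 2 := by
    intro i
    rw [key_det X y w S h hdet i]
    rw [mul_pow]
    congr 1
    ring
  -- step a: expand the loss
  have ha : A.det ^ 2 * lsLoss X y wS
      = ∑ i : Fin n,
          ((augP X r).submatrix (Sum.elim (fun a => e a) (fun _ : Fin 1 => i)) id).det ^ 2 := by
    rw [lsLoss, Finset.mul_sum]
    exact Finset.sum_congr rfl fun i _ => (hterm i).symm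
  rw [ha]
  -- step b/c: restrict to the complement
  have hb : ∀ i ∈ S, ((augP X r).submatrix
      (Sum.elim (fun a => e a) (fun _ : Fin 1 => i)) id).det ^ 2 = 0 := by
    intro i hi
    rw [hterm i]
    have : (X *ᵥ wS) i = y i := by
      obtain ⟨a, rfl⟩ : ∃ a, e a = i := by
        have : i ∈ Set.range ⇑e := by rw [he, Finset.range_orderEmbOfFin]; exact hi
        obtain ⟨a, ha'⟩ := this
        exact ⟨a, ha'⟩
      have hXe : (X *ᵥ wS) (e a) = (A *ᵥ wS) a := by
        simp [hA, rowSub, Matrix.mulVec, dotProduct, Matrix.submatrix_apply, he]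
      rw [hXe, hwS, Matrix.mulVec_mulVec, Matrix.mul_nonsing_inv A
        (isUnit_iff_ne_zero.mpr hdet), Matrix.one_mulVec]
      rfl
    rw [this]
    simp
  have hc : ∑ i : Fin n,
        ((augP X r).submatrix (Sum.elim (fun a => e a) (fun _ : Fin 1 => i)) id).det ^ 2
      = ∑ i ∈ Sᶜ,
        ((augP X r).submatrix (Sum.elim (fun a => e a) (fun _ : Fin 1 => i)) id).det ^ 2 := by
    refine (Finset.sum_subset (Finset.subset_univ _) fun i _ hi => ?_).symm
    exact hb i (by simpa using hi)
  rw [hc]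
  -- step d: identify each term with dsq of the inserted set
  refine Finset.sum_congr rfl fun i hi => ?_
  have hiS : i ∉ S := by simpa using hi
  have hcardT : (insert i S).card = d + 1 := by
    rw [Finset.card_insert_of_notMem hiS, h]
  rw [dsq_of_card _ hcardT]
  set f : Fin d ⊕ Fin 1 → Fin n := Sum.elim (fun a => e a) (fun _ : Fin 1 => i) with hf
  set g : Fin (d+1) → Fin n := f ∘ ⇑finSumFinEquiv.symm with hg
  have hMg : (M.submatrix g id).det = ((augP X r).submatrix f id).det := by
    have : M.submatrix g id = ((augP X r).submatrix f id).submatrix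
        ⇑(finSumFinEquiv (m := d) (n := 1)).symm ⇑(finSumFinEquiv (m := d) (n := 1)).symm := by
      ext a b
      simp [hM, hg, Matrix.submatrix_apply]
    rw [this, Matrix.det_submatrix_equiv_self]
  have hfinj : Injective f := by
    rintro (a | a) (b | b) hab
    · exact congrArg Sum.inl (e.injective hab)
    · exact absurd (show e a = i from hab)
        (fun hh' => hiS (hh' ▸ S.orderEmbOfFin_mem h a))
    · exact absurd (show i = e b from hab)
        (fun hh' => hiS (by rw [hh']; exact S.orderEmbOfFin_mem h b))
    · exact congrArg Sum.inr (Subsingleton.elim a b)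
  have hginj : Injective g := hfinj.comp (Equiv.injective _)
  have hrange : Set.range g = Set.range ⇑((insert i S).orderEmbOfFin hcardT) := by
    rw [Finset.range_orderEmbOfFin, hg]
    rw [Set.range_comp, Set.range_eq_univ.mpr (Equiv.surjective _), Set.image_univ]
    rw [hf, Set.Sum.elim_range]
    have h1 : Set.range (fun a => e a) = (↑S : Set (Fin n)) := by
      rw [he]; exact Finset.range_orderEmbOfFin S h
    have h2 : Set.range (fun _ : Fin 1 => i) = {i} := Set.range_const
    rw [h1, h2, Finset.coe_insert]
    ext x
    simp [or_comm]
  have hds := det_sq_range M g ⇑((insert i S).orderEmbOfFin hcardT) hginj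
    (fun a b hab => ((insert i S).orderEmbOfFin hcardT).injective hab) hrange
  exact (congrArg (fun t => t ^ 2) hMg).symm.trans hds

lemma gram_aug {n d : ℕ} (X : Matrix (Fin n) (Fin d) ℝ) (r : Fin n → ℝ)
    (horth : Xᵀ *ᵥ r = 0) :
    ((((augP X r).submatrix id ⇑finSumFinEquiv.symm)ᵀ *
      ((augP X r).submatrix id ⇑finSumFinEquiv.symm)).det)
      = (Xᵀ * X).det * ∑ j, r j ^ 2 := by
  classical
  set M := (augP X r).submatrix id ⇑(finSumFinEquiv (m := d) (n := 1)).symm with hM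
  have h1 : Mᵀ * M = ((augP X r)ᵀ * augP X r).submatrix
      ⇑(finSumFinEquiv (m := d) (n := 1)).symm ⇑(finSumFinEquiv (m := d) (n := 1)).symm := by
    ext a b
    simp [hM, Matrix.mul_apply, Matrix.submatrix_apply, Matrix.transpose_apply]
  rw [h1, Matrix.det_submatrix_equiv_self]
  have h2 : (augP X r)ᵀ * augP X r
      = Matrix.fromBlocks (Xᵀ * X) 0 0 (Matrix.of fun _ _ : Fin 1 => ∑ j, r j ^ 2) := by
    ext a b
    rcases a with a | a <;> rcases b with b | b
    · simp [augP, Matrix.mul_apply, Matrix.transpose_apply, Matrix.fromBlocks]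
    · have := congrFun horth a
      simp only [Matrix.mulVec, dotProduct, Matrix.transpose_apply, Pi.zero_apply] at this
      simp [augP, Matrix.mul_apply, Matrix.transpose_apply, Matrix.fromBlocks]
      exact this
    · have := congrFun horth b
      simp only [Matrix.mulVec, dotProduct, Matrix.transpose_apply, Pi.zero_apply] at this
      simp [augP, Matrix.mul_apply, Matrix.transpose_apply, Matrix.fromBlocks, mul_comm]
      rw [← this]
    · simp [augP, Matrix.mul_apply, Matrix.transpose_apply, Matrix.fromBlocks, sq]
  rw [h2, Matrix.det_fromBlocks_zero₂₁]
  congr 1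
  rw [Matrix.det_fin_one]
  rfl

/-- Expected loss of the Projection DPP least squares estimator: if the rows of `X` are in
general position and `Pr{S} = det(X_S)²/det(XᵀX)` over size-`d` subsets, then
`E[L(X_S⁻¹ y_S)] = (d+1) L(w*)` where `w* = (XᵀX)⁻¹Xᵀy`. -/
theorem projection_dpp_expected_loss {n d : ℕ} (hdn : d ≤ n)
    (X : Matrix (Fin n) (Fin d) ℝ) (y : Fin n → ℝ)
    (hgen : ∀ (S : Finset (Fin n)) (h : S.card = d), (rowSub X S h).det ≠ 0) :
    ∑ S ∈ (Finset.powersetCard d (Finset.univ : Finset (Fin n))).attach,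
      ((rowSub X S.1 (Finset.mem_powersetCard.mp S.2).2).det ^ 2 / (Xᵀ * X).det) *
        lsLoss X y ((rowSub X S.1 (Finset.mem_powersetCard.mp S.2).2)⁻¹ *ᵥ
          vecSub y S.1 (Finset.mem_powersetCard.mp S.2).2)
      = (d + 1) * lsLoss X y ((Xᵀ * X)⁻¹ *ᵥ (Xᵀ *ᵥ y)) := by
  classical
  set wstar : Fin d → ℝ := (Xᵀ * X)⁻¹ *ᵥ (Xᵀ *ᵥ y) with hwstar
  set r : Fin n → ℝ := fun j => y j - (X *ᵥ wstar) j with hrdef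
  set D : ℝ := (Xᵀ * X).det with hD
  -- positivity of D via Cauchy-Binet
  have hCB : D = ∑ T ∈ Finset.powersetCard d (Finset.univ : Finset (Fin n)), dsq X T :=
    cauchy_binet_gram X
  have hpos : 0 < D := by
    rw [hCB]
    refine Finset.sum_pos (fun T hT => ?_) ?_
    · have hc := (Finset.mem_powersetCard.mp hT).2
      rw [dsq_of_card X hc]
      exact pow_two_pos_of_ne_zero (hgen T hc)
    · refine Finset.powersetCard_nonempty.mpr ?_
      simpa using hdn
  have hD0 : D ≠ 0 := ne_of_gt hpos
  -- orthogonality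
  have horth : Xᵀ *ᵥ r = 0 := by
    have hrfun : r = y - X *ᵥ wstar := by
      funext j; simp [hrdef]
    rw [hrfun, Matrix.mulVec_sub, Matrix.mulVec_mulVec, hwstar, Matrix.mulVec_mulVec,
      Matrix.mul_nonsing_inv (Xᵀ * X) (isUnit_iff_ne_zero.mpr hD0), Matrix.one_mulVec,
      sub_self]
  -- the loss at wstar
  have hLstar : lsLoss X y wstar = ∑ j, r j ^ 2 := by
    rw [lsLoss]
    exact Finset.sum_congr rfl fun j _ => by rw [hrdef]; ring
  set M := (augP X r).submatrix id ⇑(finSumFinEquiv (m := d) (n := 1)).symm with hM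
  -- main chain
  have hmain : ∑ S ∈ (Finset.powersetCard d (Finset.univ : Finset (Fin n))).attach,
      (rowSub X S.1 (Finset.mem_powersetCard.mp S.2).2).det ^ 2 *
        lsLoss X y ((rowSub X S.1 (Finset.mem_powersetCard.mp S.2).2)⁻¹ *ᵥ
          vecSub y S.1 (Finset.mem_powersetCard.mp S.2).2)
      = ((d : ℝ) + 1) * (D * ∑ j, r j ^ 2) := by
    have step1 : ∀ S : {x // x ∈ Finset.powersetCard d (Finset.univ : Finset (Fin n))},
        (rowSub X S.1 (Finset.mem_powersetCard.mp S.2).2).det ^ 2 *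
          lsLoss X y ((rowSub X S.1 (Finset.mem_powersetCard.mp S.2).2)⁻¹ *ᵥ
            vecSub y S.1 (Finset.mem_powersetCard.mp S.2).2)
        = ∑ i ∈ S.1ᶜ, dsq M (insert i S.1) := by
      intro S
      exact per_S X y wstar S.1 (Finset.mem_powersetCard.mp S.2).2
        (hgen S.1 (Finset.mem_powersetCard.mp S.2).2)
    rw [Finset.sum_congr rfl fun S _ => step1 S]
    rw [Finset.sum_attach (Finset.powersetCard d (Finset.univ : Finset (Fin n)))
      (fun T => ∑ i ∈ Tᶜ, dsq M (insert i T))]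
    rw [double_count d (dsq M), ← Finset.mul_sum, ← cauchy_binet_gram M]
    rw [hM, gram_aug X r horth]
  -- conclude
  calc ∑ S ∈ (Finset.powersetCard d (Finset.univ : Finset (Fin n))).attach,
      ((rowSub X S.1 (Finset.mem_powersetCard.mp S.2).2).det ^ 2 / D) *
        lsLoss X y ((rowSub X S.1 (Finset.mem_powersetCard.mp S.2).2)⁻¹ *ᵥ
          vecSub y S.1 (Finset.mem_powersetCard.mp S.2).2)
      = (∑ S ∈ (Finset.powersetCard d (Finset.univ : Finset (Fin n))).attach,
          (rowSub X S.1 (Finset.mem_powersetCard.mp S.2).2).det ^ 2 *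
            lsLoss X y ((rowSub X S.1 (Finset.mem_powersetCard.mp S.2).2)⁻¹ *ᵥ
              vecSub y S.1 (Finset.mem_powersetCard.mp S.2).2)) / D := by
        rw [Finset.sum_div]
        exact Finset.sum_congr rfl fun S _ => div_mul_eq_mul_div _ _ _
    _ = (((d : ℝ) + 1) * (D * ∑ j, r j ^ 2)) / D := by rw [hmain]
    _ = ((d : ℝ) + 1) * ∑ j, r j ^ 2 := by
        field_simp
    _ = (d + 1) * lsLoss X y wstar := by rw [hLstar]
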